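/- Let n, d ≥ 1 and suppose there exists a function c from the nonzero vectors of F_2^n to {red, blue} such that no d-dimensional linear subspace of F_2^n has all its nonzero vectors colored red and no 2-dimensional linear subspace has all its nonzero vectors colored blue. Then there exists a set S ⊆ F_2^n with |S|·2^d ≥ 2^n (i.e., μ(S) ≥ 2^{-d}) such that no d-dimensional linear subspace of F_2^n is contained in S + S. -/

import Mathlib

open Pointwise

private lemma zmod2_cases (s : ZMod 2) : s = 0 ∨ s = 1 := by fin_cases s <;> [exact Or.inl rfl; exact Or.inr rfl]

private lemma sum_red (n : ℕ) (c : (Fin n → ZMod 2) → Bool)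
    (hblue : ¬ ∃ W : Submodule (ZMod 2) (Fin n → ZMod 2),
        Module.finrank (ZMod 2) W = 2 ∧ ∀ v ∈ W, v ≠ 0 → c v = false)
    {a b : Fin n → ZMod 2} (ha : a ≠ 0) (hb : b ≠ 0) (hab : a ≠ b)
    (hca : c a = false) (hcb : c b = false) : c (a + b) = true := by
  by_contra h
  have hcab : c (a + b) = false := by revert h; cases c (a + b) <;> simp
  apply hblue
  refine ⟨Submodule.span (ZMod 2) {a, b}, ?_, ?_⟩
  · have hli : LinearIndependent (ZMod 2) ![a, b] := by
      rw [LinearIndependent.pair_iff]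
      intro s t hst
      rcases zmod2_cases s with rfl | rfl <;> rcases zmod2_cases t with rfl | rfl
      · exact ⟨rfl, rfl⟩
      · simp only [zero_smul, one_smul, zero_add] at hst; exact absurd hst hb
      · simp only [zero_smul, one_smul, add_zero] at hst; exact absurd hst ha
      · simp only [one_smul] at hst
        have : a = b := by
          have h' := eq_neg_of_add_eq_zero_left hst
          rw [h']; ext j; exact CharTwo.neg_eq (b j)
        exact absurd this hab
    have h2 : Set.range ![a, b] = ({a, b} : Set (Fin n → ZMod 2)) := by
      ext x
      simp [Matrix.range_cons, Matrix.range_empty]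
      tauto
    have := finrank_span_eq_card hli
    rw [h2] at this
    simpa using this
  · intro v hv hv0
    rcases Submodule.mem_span_pair.1 hv with ⟨s, t, rfl⟩
    rcases zmod2_cases s with rfl | rfl <;> rcases zmod2_cases t with rfl | rfl <;>
      simp_all

private lemma greedy (n d : ℕ) (c : (Fin n → ZMod 2) → Bool)
    (B0 : Finset (Fin n → ZMod 2))
    (hB0 : ∀ v, v ∉ B0 → v ≠ 0 → c v = true)
    (h0 : (0 : Fin n → ZMod 2) ∈ B0)
    (hcard : B0.card * 2 ^ (d - 1) < 2 ^ n) :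
    ∀ i, i ≤ d → ∃ W : Submodule (ZMod 2) (Fin n → ZMod 2),
      Module.finrank (ZMod 2) W = i ∧ ∀ v ∈ W, v ≠ 0 → c v = true := by
  classical
  intro i
  induction i with
  | zero =>
    intro _
    refine ⟨⊥, by simp, ?_⟩
    intro v hv hv0
    rw [Submodule.mem_bot] at hv
    exact absurd hv hv0
  | succ i ih =>
    intro hi
    obtain ⟨W, hWrank, hWred⟩ := ih (Nat.le_of_lt hi)
    haveI : Fintype W := Fintype.ofFinite _
    have hWcard : Fintype.card W = 2 ^ i := by
      rw [Module.card_eq_pow_finrank (K := ZMod 2), hWrank, ZMod.card]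
    set WF : Finset (Fin n → ZMod 2) := (W : Set (Fin n → ZMod 2)).toFinset with hWF
    have hWFcard : WF.card = 2 ^ i := by rw [hWF, Set.toFinset_card]; exact hWcard
    set T : Finset (Fin n → ZMod 2) := (WF ×ˢ B0).image (fun p => p.1 + p.2) with hT
    have hTcard : T.card < 2 ^ n := by
      calc T.card ≤ (WF ×ˢ B0).card := Finset.card_image_le
        _ = 2 ^ i * B0.card := by rw [Finset.card_product, hWFcard]
        _ ≤ 2 ^ (d - 1) * B0.card := by
            have : 2 ^ i ≤ 2 ^ (d - 1) := Nat.pow_le_pow_right (by norm_num) (by omega)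
            exact Nat.mul_le_mul_right _ this
        _ < 2 ^ n := by rw [Nat.mul_comm]; exact hcard
    have hcardV : Fintype.card (Fin n → ZMod 2) = 2 ^ n := by simp
    have hex : ∃ x, x ∉ T := by
      by_contra hno
      push_neg at hno
      have hTuniv : T = Finset.univ := Finset.eq_univ_of_forall hno
      rw [hTuniv, Finset.card_univ, hcardV] at hTcard
      exact lt_irrefl _ hTcard
    obtain ⟨x, hx⟩ := hex
    have hgood : ∀ w ∈ W, x + w ∉ B0 := by
      intro w hw hmem
      apply hx
      rw [hT]
      refine Finset.mem_image.2 ⟨(w, x + w),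
        Finset.mem_product.2 ⟨by rw [hWF]; exact Set.mem_toFinset.2 hw, hmem⟩, ?_⟩
      show w + (x + w) = x
      have h2 : w + w = 0 := by ext j; exact CharTwo.add_self_eq_zero _
      rw [add_comm x w, ← add_assoc, h2, zero_add]
    have hxW : x ∉ W := by
      intro hxw
      apply hgood x hxw
      have : x + x = 0 := by ext j; exact CharTwo.add_self_eq_zero _
      rw [this]; exact h0
    have hx0 : x ≠ 0 := by
      intro h
      exact hxW (h ▸ W.zero_mem)
    have hinf : W ⊓ Submodule.span (ZMod 2) {x} = ⊥ := by
      rw [Submodule.eq_bot_iff]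
      rintro z ⟨hzW, hzx⟩
      rcases Submodule.mem_span_singleton.1 hzx with ⟨s, rfl⟩
      rcases zmod2_cases s with rfl | rfl
      · simp
      · rw [one_smul] at hzW; exact absurd hzW hxW
    refine ⟨W ⊔ Submodule.span (ZMod 2) {x}, ?_, ?_⟩
    · have hfd := Submodule.finrank_sup_add_finrank_inf_eq W (Submodule.span (ZMod 2) {x})
      rw [hinf, finrank_span_singleton hx0, hWrank] at hfd
      simpa using hfd
    · intro v hv hv0
      rcases Submodule.mem_sup.1 hv with ⟨w, hw, z, hz, hwz⟩
      rcases Submodule.mem_span_singleton.1 hz with ⟨s, rfl⟩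
      rcases zmod2_cases s with rfl | rfl
      · rw [zero_smul, add_zero] at hwz
        exact hWred v (hwz ▸ hw) hv0
      · rw [one_smul] at hwz
        subst hwz
        refine hB0 _ ?_ hv0
        rw [add_comm]
        exact hgood w hw

/-- Observation 2.3: if there is a red-blue coloring of the nonzero vectors
of `F_2^n` (`true` = red, `false` = blue) with no all-red `d`-dimensional subspace and no
all-blue `2`-dimensional subspace, then there is a set `S ⊆ F_2^n` with `|S|·2^d ≥ 2^n`
(i.e. `μ(S) ≥ 2^{-d}`) such that no `d`-dimensional subspace is contained in `S + S`. -/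
theorem stmt_12 (n d : ℕ) (hn : 1 ≤ n) (hd : 1 ≤ d)
    (c : (Fin n → ZMod 2) → Bool)
    (hred : ¬ ∃ V : Submodule (ZMod 2) (Fin n → ZMod 2),
        Module.finrank (ZMod 2) V = d ∧ ∀ v ∈ V, v ≠ 0 → c v = true)
    (hblue : ¬ ∃ W : Submodule (ZMod 2) (Fin n → ZMod 2),
        Module.finrank (ZMod 2) W = 2 ∧ ∀ v ∈ W, v ≠ 0 → c v = false) :
    ∃ S : Set (Fin n → ZMod 2),
      S.ncard * 2 ^ d ≥ 2 ^ n ∧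
      (¬ ∃ V : Submodule (ZMod 2) (Fin n → ZMod 2),
          Module.finrank (ZMod 2) V = d ∧ (V : Set (Fin n → ZMod 2)) ⊆ S + S) := by
  classical
  by_cases hdn : d ≤ n
  · -- main case
    set B : Finset (Fin n → ZMod 2) :=
      Finset.univ.filter (fun v => v ≠ 0 ∧ c v = false) with hB
    set B0 : Finset (Fin n → ZMod 2) := insert 0 B with hB0def
    have h0B : (0 : Fin n → ZMod 2) ∉ B := by simp [hB]
    have hB0card : B0.card = B.card + 1 := Finset.card_insert_of_notMem h0B
    have hB0prop : ∀ v, v ∉ B0 → v ≠ 0 → c v = true := by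
      intro v hv hv0
      rw [hB0def, Finset.mem_insert] at hv
      push_neg at hv
      have hvB : v ∉ B := hv.2
      rw [hB, Finset.mem_filter] at hvB
      push_neg at hvB
      have := hvB (Finset.mem_univ v) hv0
      revert this
      cases c v <;> simp
    have hge : 2 ^ n ≤ B0.card * 2 ^ (d - 1) := by
      by_contra h
      push_neg at h
      obtain ⟨W, hW, hWred⟩ :=
        greedy n d c B0 hB0prop (Finset.mem_insert_self 0 B) h d le_rfl
      exact hred ⟨W, hW, hWred⟩
    have hBpos : 1 ≤ B.card := by
      by_contra h
      push_neg at h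
      have hBc : B.card = 0 := by omega
      rw [hB0card, hBc] at hge
      have hlt : 2 ^ (d - 1) < 2 ^ n := Nat.pow_lt_pow_right (by norm_num) (by omega)
      omega
    have hScard : 2 ^ n ≤ B.card * 2 ^ d := by
      have h2d : 2 ^ d = 2 * 2 ^ (d - 1) := by
        rw [← pow_succ']
        congr 1
        omega
      rw [hB0card] at hge
      calc 2 ^ n ≤ (B.card + 1) * 2 ^ (d - 1) := hge
        _ ≤ (B.card * 2) * 2 ^ (d - 1) := by
            have : B.card + 1 ≤ B.card * 2 := by omega
            exact Nat.mul_le_mul_right _ this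
        _ = B.card * 2 ^ d := by rw [h2d]; ring
    refine ⟨(B : Set (Fin n → ZMod 2)), ?_, ?_⟩
    · rw [Set.ncard_coe_finset]; exact hScard
    · rintro ⟨V, hVrank, hVsub⟩
      apply hred
      refine ⟨V, hVrank, ?_⟩
      intro v hv hv0
      obtain ⟨a, ha, b, hb, hab⟩ := Set.mem_add.1 (hVsub hv)
      rw [Finset.mem_coe, hB, Finset.mem_filter] at ha hb
      have hne : a ≠ b := by
        intro h
        apply hv0
        rw [← hab, h]
        ext j
        exact CharTwo.add_self_eq_zero _
      rw [← hab]
      exact sum_red n c hblue ha.2.1 hb.2.1 hne ha.2.2 hb.2.2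
  · -- d > n : no d-dimensional subspace exists at all
    refine ⟨Set.univ, ?_, ?_⟩
    · have : (Set.univ : Set (Fin n → ZMod 2)).ncard = 2 ^ n := by
        rw [Set.ncard_univ, Nat.card_eq_fintype_card]
        simp
      rw [this]
      exact Nat.le_mul_of_pos_right _ (Nat.pow_pos (n := d) (by norm_num : 0 < 2))
    · rintro ⟨V, hVrank, -⟩
      have h1 : Module.finrank (ZMod 2) V ≤ n := by
        have := Submodule.finrank_le V
        rwa [Module.finrank_fin_fun] at this
      omega
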